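/- arXiv:2511.19000 — 3 statements merged into one kernel-verified Lean document; each statement's English description precedes it below -/
import Mathlib

section
/- Let X be a quasi-Banach function space satisfying (P5) over a σ-finite nonatomic measure space, and suppose the family of simple averaging operators A_E f = (μ(E)^{-1} ∫_E f dμ) χ_E, over all E with 0<μ(E)<∞, is uniformly bounded on X with constant C. Then for every t∈(0,∞), max{ φ*_X(t)·φ^★_{X'}(t), φ^★_X(t)·φ*_{X'}(t) } ≤ C t. -/
open MeasureTheory Filter Set Topology
open scoped ENNReal NNReal

noncomputable section

variable {α : Type*} [MeasurableSpace α]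

/-- A quasi-Banach function space over a measure `μ`, given by a quasi-Banach
function norm acting on nonnegative extended-real-valued functions;
properties (P1)–(P4) of the paper. -/
structure QBFS (μ : Measure α) where
  N : (α → ℝ≥0∞) → ℝ≥0∞
  congr : ∀ f g : α → ℝ≥0∞, f =ᵐ[μ] g → N f = N g
  eq_zero_iff : ∀ f : α → ℝ≥0∞, (N f = 0 ↔ f =ᵐ[μ] 0)
  smul : ∀ (c : ℝ≥0∞) (f : α → ℝ≥0∞), c ≠ ∞ → N (fun x => c * f x) = c * N f
  C : ℝ≥0∞
  one_le_C : 1 ≤ C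
  C_ne_top : C ≠ ∞
  triangle : ∀ f g : α → ℝ≥0∞, N (fun x => f x + g x) ≤ C * (N f + N g)
  mono : ∀ f g : α → ℝ≥0∞, (∀ᵐ x ∂μ, f x ≤ g x) → N f ≤ N g
  fatou : ∀ f : ℕ → α → ℝ≥0∞, (∀ n, ∀ᵐ x ∂μ, f n x ≤ f (n + 1) x) →
    N (fun x => ⨆ n, f n x) = ⨆ n, N (f n)
  chi_lt_top : ∀ E : Set α, μ E < ∞ → N (E.indicator 1) < ∞

variable {μ : Measure α}

/-- The norm of the characteristic function of `E`. -/
def QBFS.chi (X : QBFS μ) (E : Set α) : ℝ≥0∞ := X.N (E.indicator 1)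

/-- The minimal fundamental function `φ*_X`. -/
def phiMin (X : QBFS μ) (t : ℝ≥0∞) : ℝ≥0∞ :=
  ⨅ E ∈ {E : Set α | MeasurableSet E ∧ μ E = t}, X.chi E

/-- The maximal fundamental function `φ^★_X`. -/
def phiMax (X : QBFS μ) (t : ℝ≥0∞) : ℝ≥0∞ :=
  ⨆ E ∈ {E : Set α | MeasurableSet E ∧ μ E = t}, X.chi E

/-- `X` is admissible: `φ*_X(t) > 0` for every `t ∈ (0,∞)`. -/
def Admissible (X : QBFS μ) : Prop := ∀ t : ℝ≥0∞, 0 < t → t ≠ ∞ → 0 < phiMin X t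

/-- Property (P5): integral domination on sets of finite measure. -/
def P5 (X : QBFS μ) : Prop :=
  ∀ E : Set α, MeasurableSet E → μ E < ∞ →
    ∃ c : ℝ≥0∞, c ≠ ∞ ∧ ∀ f : α → ℝ≥0∞, (∫⁻ x in E, f x ∂μ) ≤ c * X.N f

/-- The associate norm `‖g‖_{X'} = sup_{‖f‖_X ≤ 1} ∫ f g dμ`. -/
def assocN (X : QBFS μ) (g : α → ℝ≥0∞) : ℝ≥0∞ :=
  ⨆ f ∈ {f : α → ℝ≥0∞ | X.N f ≤ 1}, ∫⁻ x, f x * g x ∂μ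

/-- Minimal fundamental function of the associate space. -/
def phiMinAssoc (X : QBFS μ) (t : ℝ≥0∞) : ℝ≥0∞ :=
  ⨅ E ∈ {E : Set α | MeasurableSet E ∧ μ E = t}, assocN X (E.indicator 1)

/-- Maximal fundamental function of the associate space. -/
def phiMaxAssoc (X : QBFS μ) (t : ℝ≥0∞) : ℝ≥0∞ :=
  ⨆ E ∈ {E : Set α | MeasurableSet E ∧ μ E = t}, assocN X (E.indicator 1)

/-- The simple averaging operator `A_E f = (μ(E)⁻¹ ∫_E f dμ) χ_E`. -/
def avgOp (μ : Measure α) (E : Set α) (f : α → ℝ≥0∞) : α → ℝ≥0∞ :=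
  E.indicator fun _ => (μ E)⁻¹ * ∫⁻ x in E, f x ∂μ

/-- The family of simple averaging operators is uniformly bounded on `X`
with constant `c`. -/
def UnifBoundedAvg (X : QBFS μ) (c : ℝ≥0∞) : Prop :=
  ∀ E : Set α, MeasurableSet E → 0 < μ E → μ E < ∞ →
    ∀ f : α → ℝ≥0∞, X.N f ≤ 1 → X.N (avgOp μ E f) ≤ c

/-- The quantity `sup_{‖f‖_X≤1} inf_{μ(E)≤a} ‖f χ_{R∖E}‖_Y`. -/
def acInftyFun (X Y : QBFS μ) (a : ℝ) : ℝ≥0∞ :=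
  ⨆ f ∈ {f : α → ℝ≥0∞ | X.N f ≤ 1},
    ⨅ E ∈ {E : Set α | MeasurableSet E ∧ μ E ≤ ENNReal.ofReal a}, Y.N (Eᶜ.indicator f)

/-- The relation `X ⊂∞ Y`: uniform decay of norms at infinity. -/
def AcInfty (X Y : QBFS μ) : Prop := Tendsto (acInftyFun X Y) atTop (𝓝 0)

/-- The quantity `sup_{‖f‖_X≤1} sup_{μ(E)≤a} ‖f χ_E‖_Y`. -/
def acLocFun (X Y : QBFS μ) (a : ℝ) : ℝ≥0∞ :=
  ⨆ f ∈ {f : α → ℝ≥0∞ | X.N f ≤ 1},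
    ⨆ E ∈ {E : Set α | MeasurableSet E ∧ μ E ≤ ENNReal.ofReal a}, Y.N (E.indicator f)

/-- The relation `X ⊂loc Y`: localized almost-compact embedding. -/
def AcLoc (X Y : QBFS μ) : Prop := Tendsto (acLocFun X Y) (𝓝[>] (0 : ℝ)) (𝓝 0)

/-- The weak relation `X ⊏∞ Y`. -/
def WeakAcInfty (X Y : QBFS μ) : Prop := ∃ a : ℝ, 0 < a ∧ acInftyFun X Y a < ∞

/-- Rearrangement invariance (P6): the norm only depends on the
distribution function. -/
def RearrInv (X : QBFS μ) : Prop :=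
  ∀ f g : α → ℝ≥0∞, (∀ lam : ℝ≥0∞, μ {x | lam < f x} = μ {x | lam < g x}) → X.N f = X.N g

/-- The nonincreasing rearrangement `f*`, as a function on `ℝ`
(only its values on `(0,∞)` are relevant). -/
def rearr (μ : Measure α) (f : α → ℝ≥0∞) (t : ℝ) : ℝ≥0∞ :=
  sInf {lam : ℝ≥0∞ | μ {x | lam < f x} ≤ ENNReal.ofReal t}

/-- Lebesgue measure restricted to `(0,∞)`. -/
def lebOn : Measure ℝ := volume.restrict (Ioi 0)

/-- `Xb` is the representation space of `X`: a rearrangement-invariant space over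
`(0,∞)` with `‖f‖_X = ‖f*‖_{X̄}`. -/
def IsRepSpace (X : QBFS μ) (Xb : QBFS lebOn) : Prop :=
  RearrInv Xb ∧ ∀ f : α → ℝ≥0∞, X.N f = Xb.N (rearr μ f)

/-- The Lorentz functional `‖f‖_{L^{p,q}}`. -/
def lorentzNorm (μ : Measure α) (p q : ℝ≥0∞) (f : α → ℝ≥0∞) : ℝ≥0∞ :=
  if q = ∞ then ⨆ t ∈ Ioi (0 : ℝ), ENNReal.ofReal (t ^ p.toReal⁻¹) * rearr μ f t
  else (∫⁻ t in Ioi (0 : ℝ),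
      (ENNReal.ofReal (t ^ (p.toReal⁻¹ - q.toReal⁻¹)) * rearr μ f t) ^ q.toReal) ^ q.toReal⁻¹

/-- A Young function: left-continuous, convex, vanishing at `0`, not identically
constant on `(0,∞)`. -/
structure YoungFunction where
  toFun : ℝ≥0∞ → ℝ≥0∞
  map_zero : toFun 0 = 0
  mono : Monotone toFun
  convex : ∀ (x y : ℝ≥0∞) (t : ℝ≥0), t ≤ 1 →
    toFun ((t : ℝ≥0∞) * x + ((1 - t : ℝ≥0) : ℝ≥0∞) * y) ≤
      (t : ℝ≥0∞) * toFun x + ((1 - t : ℝ≥0) : ℝ≥0∞) * toFun y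
  leftCont : ∀ x : ℝ≥0∞, x ≠ 0 → toFun x = ⨆ y ∈ Iio x, toFun y
  nontrivial : ∃ a b : ℝ≥0∞, 0 < a ∧ a ≠ ∞ ∧ 0 < b ∧ b ≠ ∞ ∧ toFun a ≠ toFun b

/-- The Orlicz (Luxemburg) norm associated with a Young function `A`. -/
def orliczNorm (μ : Measure α) (A : ℝ≥0∞ → ℝ≥0∞) (f : α → ℝ≥0∞) : ℝ≥0∞ :=
  sInf {lam : ℝ≥0∞ | lam ≠ 0 ∧ (∫⁻ x, A (f x / lam) ∂μ) ≤ 1}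

/-- The Lorentz endpoint norm `‖f‖_{Λ_φ} = ‖f‖_∞ φ(0+) + ∫_0^∞ f*(t) φ'(t) dt`. -/
def lambdaNorm (μ : Measure α) (φ : ℝ → ℝ) (f : α → ℝ≥0∞) : ℝ≥0∞ :=
  essSup f μ * ENNReal.ofReal (Function.rightLim φ 0) +
    ∫⁻ t in Ioi (0 : ℝ), rearr μ f t * ENNReal.ofReal (deriv φ t)
/-- if the simple averaging operators are uniformly bounded on `X` with
constant `c`, then `max{φ*_X(t) φ^★_{X'}(t), φ^★_X(t) φ*_{X'}(t)} ≤ c t`. -/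
theorem statement2 [SigmaFinite μ] [NullSingletonClass μ] (hμ : μ Set.univ = ∞)
    (X : QBFS μ) (hX : P5 X) (c : ℝ≥0∞) (hc : c ≠ ∞) (havg : UnifBoundedAvg X c) :
    ∀ t : ℝ≥0∞, 0 < t → t ≠ ∞ →
      max (phiMin X t * phiMaxAssoc X t) (phiMax X t * phiMinAssoc X t) ≤ c * t := by
  intro t ht ht'
  have key : ∀ F : Set α, MeasurableSet F → μ F = t →
      ∀ f : α → ℝ≥0∞, X.N f ≤ 1 →
        X.chi F * (∫⁻ x, f x * F.indicator 1 x ∂μ) ≤ c * t := by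
    intro F hF hFt f hf
    have hFlt : μ F < ∞ := by rw [hFt]; exact lt_top_iff_ne_top.2 ht'
    obtain ⟨cF, hcF, hP⟩ := hX F hF hFlt
    have hint : (∫⁻ x, f x * F.indicator 1 x ∂μ) = ∫⁻ x in F, f x ∂μ := by
      rw [← lintegral_indicator hF]
      congr 1; funext x
      by_cases hx : x ∈ F <;> simp [Set.indicator, hx]
    set I := ∫⁻ x in F, f x ∂μ with hI
    have hIne : I ≠ ∞ := by
      have h1 : I ≤ cF := (hP f).trans (by
        calc cF * X.N f ≤ cF * 1 := mul_le_mul_right hf cF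
        _ = cF := mul_one cF)
      exact (h1.trans_lt (lt_top_iff_ne_top.2 hcF)).ne
    have htinv : (t⁻¹ : ℝ≥0∞) ≠ ∞ := by
      simp [ENNReal.inv_ne_top, ht.ne']
    have havgeq : avgOp μ F f = fun x => (t⁻¹ * I) * F.indicator 1 x := by
      funext x
      by_cases hx : x ∈ F <;> simp [avgOp, hFt, Set.indicator, hx, hI]
    have hbound : X.N (avgOp μ F f) ≤ c :=
      havg F hF (by rw [hFt]; exact ht) hFlt f hf
    rw [havgeq] at hbound
    rw [X.smul (t⁻¹ * I) (F.indicator 1) (ENNReal.mul_ne_top htinv hIne)] at hbound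
    have h2 : t * ((t⁻¹ * I) * X.chi F) ≤ t * c := mul_le_mul_right hbound t
    have h3 : t * ((t⁻¹ * I) * X.chi F) = I * X.chi F := by
      rw [← mul_assoc, ← mul_assoc, ENNReal.mul_inv_cancel ht.ne' ht', one_mul]
    rw [h3] at h2
    rw [hint]
    calc X.chi F * I = I * X.chi F := mul_comm _ _
      _ ≤ t * c := h2
      _ = c * t := mul_comm _ _
  have pair : ∀ E : Set α, MeasurableSet E → μ E = t →
      X.chi E * assocN X (E.indicator 1) ≤ c * t := by
    intro E hE hEt
    rw [assocN, ENNReal.mul_iSup]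
    refine iSup_le fun f => ?_
    rw [ENNReal.mul_iSup]
    exact iSup_le fun hf => key E hE hEt f hf
  refine max_le ?_ ?_
  · rw [phiMaxAssoc, ENNReal.mul_iSup]
    refine iSup_le fun E => ?_
    rw [ENNReal.mul_iSup]
    refine iSup_le fun hE => ?_
    have h1 : phiMin X t ≤ X.chi E := iInf₂_le E hE
    exact (mul_le_mul_left h1 _).trans (pair E hE.1 hE.2)
  · rw [phiMax, ENNReal.iSup_mul]
    refine iSup_le fun E => ?_
    rw [ENNReal.iSup_mul]
    refine iSup_le fun hE => ?_
    have h1 : phiMinAssoc X t ≤ assocN X (E.indicator 1) := iInf₂_le E hE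
    exact (mul_le_mul_right h1 _).trans (pair E hE.1 hE.2)
end
end

section
/- Let X and Y be quasi-Banach function spaces over a σ-finite nonatomic measure space with μ(R)=∞. If X ⊂loc Y (i.e., lim_{a→0+} sup_{‖f‖_X≤1} sup_{μ(E)≤a} ‖f χ_E‖_Y = 0), then lim_{a→0+} φ^★_Y(a)/φ^★_X(a) = 0, and in particular lim_{a→0+} φ^★_Y(a) = 0. -/
open MeasureTheory Filter Set Topology
open scoped ENNReal NNReal

noncomputable section

variable {α : Type*} [MeasurableSpace α]

variable {μ : Measure α}

section Aux

lemma QBFS.chi_ne_zero' (X : QBFS μ) {E : Set α} (hE : μ E ≠ 0) : X.chi E ≠ 0 := by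
  intro h0
  apply hE
  have h1 := (X.eq_zero_iff _).mp h0
  have h2 : μ {x | E.indicator (1 : α → ℝ≥0∞) x ≠ (0 : ℝ≥0∞)} = 0 := by
    simpa [Filter.EventuallyEq, MeasureTheory.ae_iff] using h1
  have h3 : {x | E.indicator (1 : α → ℝ≥0∞) x ≠ (0 : ℝ≥0∞)} = E := by
    ext x; by_cases hx : x ∈ E <;> simp [Set.indicator_apply, hx]
  rwa [h3] at h2

lemma claimA (X Y : QBFS μ) (s : ℝ) {E : Set α} (hEm : MeasurableSet E)
    (h0 : μ E ≠ 0) (hT : μ E < ∞) (hs : μ E ≤ ENNReal.ofReal s) :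
    Y.chi E ≤ acLocFun X Y s * X.chi E := by
  set c := X.chi E with hc
  have hc0 : c ≠ 0 := X.chi_ne_zero' h0
  have hcT : c ≠ ∞ := (X.chi_lt_top E hT).ne
  set f : α → ℝ≥0∞ := fun x => c⁻¹ * E.indicator 1 x with hf
  have hNf : X.N f = 1 := by
    rw [hf, X.smul c⁻¹ _ (ENNReal.inv_ne_top.mpr hc0)]
    exact ENNReal.inv_mul_cancel hc0 hcT
  have hfmem : f ∈ {g : α → ℝ≥0∞ | X.N g ≤ 1} := le_of_eq hNf
  have hEmem : E ∈ {F : Set α | MeasurableSet F ∧ μ F ≤ ENNReal.ofReal s} := ⟨hEm, hs⟩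
  have hind : E.indicator f = f := by
    funext x; by_cases hx : x ∈ E <;> simp [hf, Set.indicator_apply, hx]
  have hle : Y.N (E.indicator f) ≤ acLocFun X Y s := by
    have h1 : Y.N (E.indicator f) ≤
        ⨆ E' ∈ {F : Set α | MeasurableSet F ∧ μ F ≤ ENNReal.ofReal s}, Y.N (E'.indicator f) :=
      le_biSup (fun E' => Y.N (E'.indicator f)) hEmem
    exact h1.trans (le_biSup (fun g => ⨆ E' ∈ {F : Set α | MeasurableSet F ∧ μ F ≤ ENNReal.ofReal s}, Y.N (E'.indicator g)) hfmem)
  have hYf : Y.N f = c⁻¹ * Y.chi E := by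
    rw [hf, Y.smul c⁻¹ _ (ENNReal.inv_ne_top.mpr hc0)]; rfl
  calc Y.chi E = (c * c⁻¹) * Y.chi E := by rw [ENNReal.mul_inv_cancel hc0 hcT, one_mul]
    _ = c * (c⁻¹ * Y.chi E) := mul_assoc _ _ _
    _ = c * Y.N (E.indicator f) := by rw [hind, hYf]
    _ ≤ c * acLocFun X Y s := mul_le_mul_right hle c
    _ = acLocFun X Y s * c := mul_comm _ _

lemma ratio_le (X Y : QBFS μ) (s : ℝ) {a : ℝ≥0∞} (ha : a ≠ 0) (has : a ≤ ENNReal.ofReal s) :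
    phiMax Y a / phiMax X a ≤ acLocFun X Y s := by
  have haT : a < ∞ := lt_of_le_of_lt has ENNReal.ofReal_lt_top
  by_cases hX : phiMax X a = ∞
  · simp [hX, ENNReal.div_top]
  have hYle : phiMax Y a ≤ acLocFun X Y s * phiMax X a := by
    refine iSup₂_le fun E hE => ?_
    have h1 := claimA X Y s hE.1 (hE.2 ▸ ha) (hE.2 ▸ haT) (hE.2 ▸ has)
    exact h1.trans (mul_le_mul_right (le_biSup _ hE) _)
  by_cases hX0 : phiMax X a = 0
  · have : phiMax Y a = 0 := le_antisymm (hYle.trans (by simp [hX0])) zero_le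
    simp [this]
  · exact (ENNReal.div_le_iff_le_mul (Or.inl hX0) (Or.inl hX)).mpr hYle

end Aux

/-- if `X ⊂loc Y`, then `φ^★_Y(a)/φ^★_X(a) → 0` and `φ^★_Y(a) → 0`
as `a → 0+`. -/
theorem statement5 [SigmaFinite μ] [NullSingletonClass μ] (hμ : μ Set.univ = ∞)
    (X Y : QBFS μ) (h : AcLoc X Y) :
    Tendsto (fun a : ℝ≥0∞ => phiMax Y a / phiMax X a) (𝓝[>] (0 : ℝ≥0∞)) (𝓝 0) ∧
      Tendsto (fun a : ℝ≥0∞ => phiMax Y a) (𝓝[>] (0 : ℝ≥0∞)) (𝓝 0) := by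
  constructor
  · -- ratio part
    rw [ENNReal.tendsto_nhds_zero]
    intro ε hε
    have hev := (ENNReal.tendsto_nhds_zero.mp h) ε hε
    obtain ⟨s, hs1, hs2⟩ := (hev.and self_mem_nhdsWithin).exists
    have hofs : (0 : ℝ≥0∞) < ENNReal.ofReal s := ENNReal.ofReal_pos.mpr hs2
    filter_upwards [Ioo_mem_nhdsGT_of_mem (show (0 : ℝ≥0∞) ∈ Ico 0 (ENNReal.ofReal s) from
      ⟨le_refl _, hofs⟩)] with a ha
    exact (ratio_le X Y s ha.1.ne' ha.2.le).trans hs1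
  · -- phiMax Y → 0
    by_contra hcon
    rw [ENNReal.tendsto_nhds_zero] at hcon
    push_neg at hcon
    obtain ⟨ε, hε, hfreq⟩ := hcon
    simp only [← not_le] at hfreq
    set ε' := min ε 1 with hε'def
    have hε'0 : ε' ≠ 0 := (lt_min hε zero_lt_one).ne'
    have hε'T : ε' ≠ ∞ := ((min_le_right _ _).trans_lt ENNReal.one_lt_top).ne
    have hε'ε : ε' ≤ ε := min_le_left _ _
    -- extract a sequence of small sets with big Y-norm
    have key : ∀ n : ℕ, ∃ E : Set α, MeasurableSet E ∧ μ E ≠ 0 ∧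
        μ E < (2 : ℝ≥0∞)⁻¹ ^ n ∧ ε < Y.chi E := by
      intro n
      have hpow : (0 : ℝ≥0∞) < (2 : ℝ≥0∞)⁻¹ ^ n :=
        ENNReal.pow_pos (ENNReal.inv_pos.mpr ENNReal.ofNat_ne_top) n
      have hmem : Ioo (0 : ℝ≥0∞) ((2 : ℝ≥0∞)⁻¹ ^ n) ∈ 𝓝[>] (0 : ℝ≥0∞) :=
        Ioo_mem_nhdsGT_of_mem ⟨le_refl _, hpow⟩
      obtain ⟨a, hna, hIoo⟩ :=
        (hfreq.and_eventually (eventually_of_mem hmem fun x hx => hx)).exists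
      have hlt : ε < phiMax Y a := not_le.mp hna
      rw [phiMax, lt_iSup_iff] at hlt
      obtain ⟨E, hE⟩ := hlt
      rw [lt_iSup_iff] at hE
      obtain ⟨hEmem, hltE⟩ := hE
      refine ⟨E, hEmem.1, ?_, ?_, hltE⟩
      · rw [hEmem.2]; exact hIoo.1.ne'
      · rw [hEmem.2]; exact hIoo.2
    choose E hEm hE0 hEsmall hEY using key
    set F := ⋃ n, E n with hF
    have hFT : μ F < ∞ := by
      have h1 : μ F ≤ ∑' n, μ (E n) := measure_iUnion_le E
      have h2 : (∑' n, μ (E n)) ≤ ∑' n : ℕ, (2 : ℝ≥0∞)⁻¹ ^ n :=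
        ENNReal.tsum_le_tsum fun n => (hEsmall n).le
      have h3 : (∑' n : ℕ, (2 : ℝ≥0∞)⁻¹ ^ n) = (1 - 2⁻¹)⁻¹ := ENNReal.tsum_geometric _
      have h4 : (1 - (2 : ℝ≥0∞)⁻¹)⁻¹ = 2 := by
        rw [ENNReal.one_sub_inv_two, inv_inv]
      exact (h1.trans (h2.trans_eq (h3.trans h4))).trans_lt ENNReal.ofNat_lt_top
    set K := X.chi F with hK
    have hKT : K ≠ ∞ := (X.chi_lt_top F hFT).ne
    have hK0 : K ≠ 0 := by
      refine X.chi_ne_zero' fun hF0 => hE0 0 (le_antisymm ?_ zero_le)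
      rw [← hF0]
      exact measure_mono (Set.subset_iUnion E 0)
    have hchi_le : ∀ n, X.chi (E n) ≤ K := by
      intro n
      refine X.mono _ _ (Filter.Eventually.of_forall fun x => ?_)
      exact Set.indicator_le_indicator_of_subset (Set.subset_iUnion E n)
        (fun _ => zero_le) x
    -- choose the scale s
    have hδ : (0 : ℝ≥0∞) < ε' / (2 * K) :=
      ENNReal.div_pos hε'0 (ENNReal.mul_ne_top ENNReal.ofNat_ne_top hKT)
    have hev := (ENNReal.tendsto_nhds_zero.mp h) (ε' / (2 * K)) hδ
    obtain ⟨s, hs1, hs2⟩ := (hev.and self_mem_nhdsWithin).exists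
    have hofs : (0 : ℝ≥0∞) < ENNReal.ofReal s := ENNReal.ofReal_pos.mpr hs2
    -- choose n with 2⁻¹ ^ n ≤ ofReal s
    have hpowlim : Tendsto (fun n : ℕ => (2 : ℝ≥0∞)⁻¹ ^ n) atTop (𝓝 0) :=
      ENNReal.tendsto_pow_atTop_nhds_zero_of_lt_one
        (ENNReal.inv_lt_one.mpr ENNReal.one_lt_two)
    obtain ⟨n, hn⟩ := (hpowlim.eventually_lt_const hofs).exists
    have hEs : μ (E n) ≤ ENNReal.ofReal s := ((hEsmall n).trans hn).le
    have hbound : Y.chi (E n) ≤ ε' / (2 * K) * K := by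
      have h1 := claimA X Y s (hEm n) (hE0 n)
        ((hEsmall n).trans_le le_top) hEs
      exact h1.trans (mul_le_mul' hs1 (hchi_le n))
    have h2 : ε' / (2 * K) * K ≤ ε' / 2 := by
      rw [div_eq_mul_inv, ENNReal.mul_inv (Or.inl (NeZero.ne 2)) (Or.inr hK0),
        ← mul_assoc, mul_assoc, ENNReal.inv_mul_cancel hK0 hKT, mul_one,
        ← div_eq_mul_inv]
    have hhalf : ε' / 2 < ε' := ENNReal.half_lt_self hε'0 hε'T
    have : ε' < ε' :=
      lt_of_le_of_lt (hε'ε.trans (hEY n).le) ((hbound.trans h2).trans_lt hhalf)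
    exact lt_irrefl _ this
end
end

section
/- For Lorentz spaces over a σ-finite nonatomic measure space with μ(R)=∞: given p₁,p₂,q₁,q₂ ∈ (0,∞] with p_j < ∞ or p_j=q_j=∞ for j=1,2, the relation L^{p₁,q₁} ⊂∞ L^{p₂,q₂} holds if and only if p₁ < p₂. -/
open MeasureTheory Filter Set Topology
open scoped ENNReal NNReal

noncomputable section

variable {α : Type*} [MeasurableSpace α]

variable {μ : Measure α}

/-! ### Helper lemmas -/

section Helpers

lemma rearr_anti (f : α → ℝ≥0∞) {s t : ℝ} (hst : s ≤ t) :
    rearr μ f t ≤ rearr μ f s := by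
  apply sInf_le_sInf
  intro lam hlam
  exact hlam.trans (ENNReal.ofReal_le_ofReal hst)

lemma rearr_mono {f g : α → ℝ≥0∞} (h : ∀ x, f x ≤ g x) (t : ℝ) :
    rearr μ f t ≤ rearr μ g t := by
  apply sInf_le_sInf
  intro lam hlam
  refine le_trans (measure_mono ?_) hlam
  intro x hx
  exact lt_of_lt_of_le hx (h x)

lemma rearr_le_of_forall_le {f : α → ℝ≥0∞} {c : ℝ≥0∞} (h : ∀ x, f x ≤ c) (t : ℝ) :
    rearr μ f t ≤ c := by
  apply sInf_le
  have : {x | c < f x} = ∅ := by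
    ext x; simp only [mem_setOf_eq, mem_empty_iff_false, iff_false, not_lt]; exact h x
  simp [rearr, this]

lemma measure_lt_rearr_le (f : α → ℝ≥0∞) (t : ℝ) :
    μ {x | rearr μ f t < f x} ≤ ENNReal.ofReal t := by
  set b := rearr μ f t with hb
  rcases eq_or_ne b ∞ with hbt | hbt
  · have : {x | b < f x} = ∅ := by
      ext x; simp [hbt]
    simp [this]
  · set A : ℕ → Set α := fun n => {x | b + (n : ℝ≥0∞)⁻¹ < f x} with hA
    have hmono : Monotone A := by
      intro n m hnm x hx
      refine lt_of_le_of_lt (add_le_add le_rfl ?_) (show b + (n : ℝ≥0∞)⁻¹ < f x from hx)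
      exact ENNReal.inv_le_inv.2 (by exact_mod_cast hnm)
    have hunion : {x | b < f x} = ⋃ n, A n := by
      ext x
      simp only [mem_setOf_eq, mem_iUnion, hA]
      constructor
      · intro hx
        have hpos : 0 < f x - b := tsub_pos_iff_lt.2 hx
        obtain ⟨n, hn⟩ := ENNReal.exists_inv_nat_lt hpos.ne'
        exact ⟨n, by
          calc b + (n : ℝ≥0∞)⁻¹ < b + (f x - b) := ENNReal.add_lt_add_left hbt hn
          _ = f x := add_tsub_cancel_of_le hx.le⟩
      · rintro ⟨n, hn⟩
        exact lt_of_le_of_lt (le_add_right le_rfl) hn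
    have hle : ∀ n, μ (A n) ≤ ENNReal.ofReal t := by
      intro n
      have hlt : b < b + (n : ℝ≥0∞)⁻¹ :=
        ENNReal.lt_add_right hbt (by simp)
      obtain ⟨lam, hlamS, hlamlt⟩ := sInf_lt_iff.1 (hb ▸ hlt)
      refine le_trans (measure_mono ?_) hlamS
      intro x hx
      exact lt_of_le_of_lt hlamlt.le hx
    calc μ {x | b < f x} = μ (⋃ n, A n) := by rw [hunion]
    _ = ⨆ n, μ (A n) := (hmono.directed_le).measure_iUnion
    _ ≤ ENNReal.ofReal t := iSup_le hle

lemma rearr_indicator_one (F : Set α) (t : ℝ) :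
    rearr μ (F.indicator 1) t = if ENNReal.ofReal t < μ F then 1 else 0 := by
  have hdist : ∀ lam : ℝ≥0∞, {x | lam < F.indicator 1 x} = if lam < 1 then F else ∅ := by
    intro lam
    split_ifs with h
    · ext x
      simp only [mem_setOf_eq, Set.indicator]
      by_cases hx : x ∈ F <;> simp +contextual [hx, h]
    · ext x
      simp only [mem_setOf_eq, mem_empty_iff_false, iff_false, not_lt]
      by_cases hx : x ∈ F <;> simp [hx, not_lt.1 h]
  unfold rearr
  split_ifs with h
  · -- ofReal t < μ F : the set is {lam | ¬ lam < 1} = Ici 1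
    have : {lam : ℝ≥0∞ | μ {x | lam < F.indicator 1 x} ≤ ENNReal.ofReal t} = Ici 1 := by
      ext lam
      simp only [mem_setOf_eq, hdist, mem_Ici]
      split_ifs with h1
      · simp [not_le.2 h, not_le.2 h1]
      · simp [not_lt.1 h1]
    rw [this]
    exact csInf_Ici
  · have : {lam : ℝ≥0∞ | μ {x | lam < F.indicator 1 x} ≤ ENNReal.ofReal t} = univ := by
      ext lam
      simp only [mem_setOf_eq, hdist, mem_univ, iff_true]
      split_ifs with h1
      · exact not_lt.1 h
      · simp
    rw [this, sInf_univ]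
    rfl

end Helpers

section Integrals

lemma lint_Ioo {r b : ℝ} (hr : 0 < r) (hb : 0 < b) :
    ∫⁻ t in Ioo (0 : ℝ) b, ENNReal.ofReal (t ^ (r - 1)) = ENNReal.ofReal (b ^ r / r) := by
  have hint : IntegrableOn (fun t : ℝ => t ^ (r - 1)) (Ioc 0 b) volume := by
    have := intervalIntegral.intervalIntegrable_rpow' (a := 0) (b := b) (r := r - 1) (by linarith)
    rwa [intervalIntegrable_iff_integrableOn_Ioc_of_le hb.le] at this
  have hval : ∫ t in Ioc (0 : ℝ) b, t ^ (r - 1) = b ^ r / r := by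
    rw [← intervalIntegral.integral_of_le hb.le,
      integral_rpow (Or.inl (by linarith : (-1 : ℝ) < r - 1))]
    rw [sub_add_cancel, Real.zero_rpow hr.ne']
    ring
  rw [setLIntegral_congr (Ioo_ae_eq_Ioc (μ := volume) (a := (0:ℝ)) (b := b)),
    ← ofReal_integral_eq_lintegral_ofReal hint ?_, hval]
  · filter_upwards [ae_restrict_mem measurableSet_Ioc] with x hx
    exact Real.rpow_nonneg hx.1.le _

lemma lint_Ioi {r b : ℝ} (hr : r < 0) (hb : 0 < b) :
    ∫⁻ t in Ioi b, ENNReal.ofReal (t ^ (r - 1)) = ENNReal.ofReal (b ^ r / (-r)) := by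
  have hint : IntegrableOn (fun t : ℝ => t ^ (r - 1)) (Ioi b) volume :=
    integrableOn_Ioi_rpow_of_lt (by linarith) hb
  have hval : ∫ t in Ioi b, t ^ (r - 1) = b ^ r / (-r) := by
    rw [integral_Ioi_rpow_of_lt (by linarith) hb, sub_add_cancel]
    ring
  rw [← ofReal_integral_eq_lintegral_ofReal hint ?_, hval]
  · filter_upwards [ae_restrict_mem measurableSet_Ioi] with x hx
    exact Real.rpow_nonneg (hb.trans hx).le _

lemma lint_Ioi_zero_top {r : ℝ} (hr : 0 < r) :
    ∫⁻ t in Ioi (0 : ℝ), ENNReal.ofReal (t ^ (r - 1)) = ∞ := by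
  refine top_le_iff.1 ?_
  have hle : ∀ n : ℕ, ENNReal.ofReal ((n : ℝ) ^ r / r) ≤
      ∫⁻ t in Ioi (0 : ℝ), ENNReal.ofReal (t ^ (r - 1)) := by
    intro n
    rcases Nat.eq_zero_or_pos n with hn | hn
    · simp [hn, Real.zero_rpow hr.ne']
    · rw [← lint_Ioo hr (by exact_mod_cast hn)]
      exact lintegral_mono_set Ioo_subset_Ioi_self
  have htend : Tendsto (fun n : ℕ => ENNReal.ofReal ((n : ℝ) ^ r / r)) atTop (𝓝 ∞) := by
    apply ENNReal.tendsto_ofReal_atTop.comp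
    apply Tendsto.atTop_div_const hr
    exact (tendsto_rpow_atTop hr).comp tendsto_natCast_atTop_atTop
  exact le_of_tendsto' htend hle

end Integrals

section IndicatorNorm

/-- The constant `(p/q)^(1/q)` appearing in the Lorentz norm of an indicator. -/
def lcst (p q : ℝ≥0∞) : ℝ≥0∞ :=
  if q = ∞ then 1 else ENNReal.ofReal ((p.toReal / q.toReal) ^ q.toReal⁻¹)

lemma lcst_pos {p q : ℝ≥0∞} (hp0 : 0 < p) (hp : p ≠ ∞) (hq0 : 0 < q) : 0 < lcst p q := by
  unfold lcst
  split_ifs with hq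
  · exact one_pos
  · exact ENNReal.ofReal_pos.2 (Real.rpow_pos_of_pos
      (div_pos (ENNReal.toReal_pos hp0.ne' hp) (ENNReal.toReal_pos hq0.ne' hq)) _)

lemma lcst_ne_top (p q : ℝ≥0∞) : lcst p q ≠ ∞ := by
  unfold lcst; split_ifs <;> simp

lemma lorentzNorm_indicator {p q : ℝ≥0∞} (hp0 : 0 < p) (hp : p ≠ ∞) (hq0 : 0 < q)
    (F : Set α) :
    lorentzNorm μ p q (F.indicator 1) = lcst p q * (μ F) ^ p.toReal⁻¹ := by
  have hP : 0 < p.toReal := ENNReal.toReal_pos hp0.ne' hp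
  rcases eq_or_ne q ∞ with hq | hq
  · subst hq
    rw [lorentzNorm, if_pos rfl, lcst, if_pos rfl, one_mul]
    by_cases hm : μ F = 0
    · have h0 : ∀ t : ℝ, t ∈ Ioi (0:ℝ) →
          ENNReal.ofReal (t ^ p.toReal⁻¹) * rearr μ (F.indicator 1) t = 0 := by
        intro t ht
        rw [rearr_indicator_one, hm, if_neg (by simp), mul_zero]
      rw [hm, ENNReal.zero_rpow_of_pos (by positivity)]
      exact le_antisymm (iSup₂_le fun t ht => le_of_eq (h0 t ht)) zero_le
    · apply le_antisymm
      · refine iSup₂_le fun t ht => ?_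
        rw [rearr_indicator_one]
        split_ifs with h
        · rw [mul_one, ← ENNReal.ofReal_rpow_of_pos ht]
          exact ENNReal.rpow_le_rpow h.le (by positivity)
        · simp
      · refine le_of_forall_lt fun w hw => ?_
        have hw' : w ^ p.toReal < μ F := by
          have h2 := ENNReal.rpow_lt_rpow hw hP
          rwa [← ENNReal.rpow_mul, inv_mul_cancel₀ hP.ne', ENNReal.rpow_one] at h2
        obtain ⟨r, hr0, hr1, hr2⟩ := ENNReal.lt_iff_exists_real_btwn.1 hw'
        have hrpos : 0 < r := by
          rcases hr0.lt_or_eq with h | h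
          · exact h
          · exfalso; rw [← h] at hr1; simp at hr1
        have hterm : w < ENNReal.ofReal (r ^ p.toReal⁻¹) * rearr μ (F.indicator 1) r := by
          rw [rearr_indicator_one, if_pos hr2, mul_one, ← ENNReal.ofReal_rpow_of_pos hrpos]
          calc w = (w ^ p.toReal) ^ p.toReal⁻¹ := by
                rw [← ENNReal.rpow_mul, mul_inv_cancel₀ hP.ne', ENNReal.rpow_one]
          _ < (ENNReal.ofReal r) ^ p.toReal⁻¹ := ENNReal.rpow_lt_rpow hr1 (by positivity)
        exact lt_of_lt_of_le hterm
          (le_biSup (fun t => ENNReal.ofReal (t ^ p.toReal⁻¹) * rearr μ (F.indicator 1) t)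
            (show r ∈ Ioi (0:ℝ) from hrpos))
  · rw [lorentzNorm, if_neg hq, lcst, if_neg hq]
    have hQ : 0 < q.toReal := ENNReal.toReal_pos hq0.ne' hq
    set P := p.toReal with hPdef
    set Q := q.toReal with hQdef
    have hPQ : 0 < Q / P := div_pos hQ hP
    have hexp : (P⁻¹ - Q⁻¹) * Q = Q / P - 1 := by field_simp
    rcases eq_or_ne (μ F) ∞ with hm | hm
    · have hcong : ∀ᵐ t ∂(volume.restrict (Ioi (0:ℝ))),
          (ENNReal.ofReal (t ^ (P⁻¹ - Q⁻¹)) * rearr μ (F.indicator 1) t) ^ Q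
            = ENNReal.ofReal (t ^ (Q / P - 1)) := by
        filter_upwards [ae_restrict_mem measurableSet_Ioi] with t ht
        have hcnd : ENNReal.ofReal t < μ F := by rw [hm]; exact ENNReal.ofReal_lt_top
        rw [rearr_indicator_one, if_pos hcnd, mul_one,
          ← ENNReal.ofReal_rpow_of_pos ht, ← ENNReal.rpow_mul, hexp]
        exact ENNReal.ofReal_rpow_of_pos ht
      rw [lintegral_congr_ae hcong, lint_Ioi_zero_top hPQ,
        ENNReal.top_rpow_of_pos (by positivity), hm,
        ENNReal.top_rpow_of_pos (by positivity), ENNReal.mul_top]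
      exact (ENNReal.ofReal_pos.2 (Real.rpow_pos_of_pos (div_pos hP hQ) _)).ne'
    rcases eq_or_ne (μ F) 0 with hm0 | hm0
    · have hcong : ∀ᵐ t ∂(volume.restrict (Ioi (0:ℝ))),
          (ENNReal.ofReal (t ^ (P⁻¹ - Q⁻¹)) * rearr μ (F.indicator 1) t) ^ Q = 0 := by
        filter_upwards [ae_restrict_mem measurableSet_Ioi] with t ht
        rw [rearr_indicator_one, hm0, if_neg (by simp), mul_zero,
          ENNReal.zero_rpow_of_pos hQ]
      rw [lintegral_congr_ae hcong, lintegral_zero, ENNReal.zero_rpow_of_pos (by positivity),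
        hm0, ENNReal.zero_rpow_of_pos (by positivity), mul_zero]
    · set b := (μ F).toReal with hbdef
      have hb : 0 < b := ENNReal.toReal_pos hm0 hm
      have hofb : ENNReal.ofReal b = μ F := ENNReal.ofReal_toReal hm
      have hsplit : (∫⁻ t in Ioi (0:ℝ),
            (ENNReal.ofReal (t ^ (P⁻¹ - Q⁻¹)) * rearr μ (F.indicator 1) t) ^ Q)
          = (∫⁻ t in Ioo (0:ℝ) b,
            (ENNReal.ofReal (t ^ (P⁻¹ - Q⁻¹)) * rearr μ (F.indicator 1) t) ^ Q)
          + (∫⁻ t in Ici b,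
            (ENNReal.ofReal (t ^ (P⁻¹ - Q⁻¹)) * rearr μ (F.indicator 1) t) ^ Q) := by
        rw [← lintegral_union measurableSet_Ici
          ((Set.Iio_disjoint_Ici le_rfl).mono_left Set.Ioo_subset_Iio_self),
          Set.Ioo_union_Ici_eq_Ioi hb]
      have hfirst : (∫⁻ t in Ioo (0:ℝ) b,
            (ENNReal.ofReal (t ^ (P⁻¹ - Q⁻¹)) * rearr μ (F.indicator 1) t) ^ Q)
          = ENNReal.ofReal (b ^ (Q / P) / (Q / P)) := by
        rw [← lint_Ioo hPQ hb]
        apply lintegral_congr_ae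
        filter_upwards [ae_restrict_mem measurableSet_Ioo] with t ht
        have hcnd : ENNReal.ofReal t < μ F := by
          rw [← hofb]; exact (ENNReal.ofReal_lt_ofReal_iff hb).2 ht.2
        rw [rearr_indicator_one, if_pos hcnd, mul_one,
          ← ENNReal.ofReal_rpow_of_pos ht.1, ← ENNReal.rpow_mul, hexp]
        exact ENNReal.ofReal_rpow_of_pos ht.1
      have hsecond : (∫⁻ t in Ici b,
            (ENNReal.ofReal (t ^ (P⁻¹ - Q⁻¹)) * rearr μ (F.indicator 1) t) ^ Q) = 0 := by
        have hcong : ∀ᵐ t ∂(volume.restrict (Ici b)),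
            (ENNReal.ofReal (t ^ (P⁻¹ - Q⁻¹)) * rearr μ (F.indicator 1) t) ^ Q = 0 := by
          filter_upwards [ae_restrict_mem measurableSet_Ici] with t ht
          have hcnd : ¬ ENNReal.ofReal t < μ F := by
            rw [← hofb]; exact not_lt.2 (ENNReal.ofReal_le_ofReal ht)
          rw [rearr_indicator_one, if_neg hcnd, mul_zero,
            ENNReal.zero_rpow_of_pos hQ]
        rw [lintegral_congr_ae hcong, lintegral_zero]
      have h1 : b ^ (Q / P) / (Q / P) = (P / Q) * b ^ (Q / P) := by
        rw [div_eq_mul_inv, inv_div, mul_comm]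
      have hreal : (b ^ (Q / P) / (Q / P)) ^ Q⁻¹ = (P / Q) ^ Q⁻¹ * b ^ P⁻¹ := by
        rw [h1, Real.mul_rpow (by positivity) (by positivity), ← Real.rpow_mul hb.le,
          div_mul_eq_mul_div, mul_inv_cancel₀ hQ.ne', one_div]
      rw [hsplit, hfirst, hsecond, add_zero,
        ENNReal.ofReal_rpow_of_pos (by positivity), hreal,
        ENNReal.ofReal_mul (by positivity), ← ENNReal.ofReal_rpow_of_pos hb, hofb]

end IndicatorNorm

section MoreHelpers

lemma lorentzNorm_indicator_top (F : Set α) (hF : 0 < μ F) :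
    lorentzNorm μ ∞ ∞ (F.indicator 1) = 1 := by
  rw [lorentzNorm, if_pos rfl]
  have hexp : (∞ : ℝ≥0∞).toReal⁻¹ = 0 := by simp
  apply le_antisymm
  · refine iSup₂_le fun t ht => ?_
    rw [hexp, Real.rpow_zero, ENNReal.ofReal_one, one_mul, rearr_indicator_one]
    split_ifs <;> simp
  · obtain ⟨r, hr0, hr1, hr2⟩ := ENNReal.lt_iff_exists_real_btwn.1 hF
    have hrpos : 0 < r := ENNReal.ofReal_pos.1 hr1
    refine le_trans ?_
      (le_biSup (fun t => ENNReal.ofReal (t ^ (∞ : ℝ≥0∞).toReal⁻¹) * rearr μ (F.indicator 1) t)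
        (show r ∈ Ioi (0:ℝ) from hrpos))
    show (1:ℝ≥0∞) ≤ ENNReal.ofReal (r ^ (∞ : ℝ≥0∞).toReal⁻¹) * rearr μ (F.indicator 1) r
    rw [hexp, Real.rpow_zero, ENNReal.ofReal_one, one_mul, rearr_indicator_one, if_pos hr2]

lemma ofReal_div_rpow_inv {P Q b : ℝ} (hP : 0 < P) (hQ : 0 < Q) (hb : 0 < b) :
    (ENNReal.ofReal (b ^ (Q / P) / (Q / P))) ^ Q⁻¹
      = ENNReal.ofReal ((P / Q) ^ Q⁻¹) * (ENNReal.ofReal b) ^ P⁻¹ := by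
  have h1 : b ^ (Q / P) / (Q / P) = (P / Q) * b ^ (Q / P) := by
    rw [div_eq_mul_inv, inv_div, mul_comm]
  rw [ENNReal.ofReal_rpow_of_pos (by positivity), h1,
    Real.mul_rpow (by positivity) (by positivity), ← Real.rpow_mul hb.le,
    div_mul_eq_mul_div, mul_inv_cancel₀ hQ.ne', one_div,
    ENNReal.ofReal_mul (by positivity), ← ENNReal.ofReal_rpow_of_pos hb]

lemma rearr_le_of_lorentzNorm_le {p q : ℝ≥0∞} (hp0 : 0 < p) (hp : p ≠ ∞) (hq0 : 0 < q)
    {f : α → ℝ≥0∞} (hf : lorentzNorm μ p q f ≤ 1) {t : ℝ} (ht : 0 < t) :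
    rearr μ f t ≤ (lcst p q)⁻¹ * (ENNReal.ofReal t) ^ (-(p.toReal⁻¹)) := by
  have hP : 0 < p.toReal := ENNReal.toReal_pos hp0.ne' hp
  have htne : ENNReal.ofReal t ≠ 0 := (ENNReal.ofReal_pos.2 ht).ne'
  rcases eq_or_ne q ∞ with hq | hq
  · subst hq
    rw [lorentzNorm, if_pos rfl] at hf
    have h1 : ENNReal.ofReal (t ^ p.toReal⁻¹) * rearr μ f t ≤ 1 :=
      le_trans (le_biSup (fun s => ENNReal.ofReal (s ^ p.toReal⁻¹) * rearr μ f s)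
        (show t ∈ Ioi (0:ℝ) from ht)) hf
    rw [← ENNReal.ofReal_rpow_of_pos ht] at h1
    rw [lcst, if_pos rfl, inv_one, one_mul, ENNReal.rpow_neg]
    rw [← one_div]
    rw [ENNReal.le_div_iff_mul_le
      (Or.inl (ENNReal.rpow_pos (ENNReal.ofReal_pos.2 ht) ENNReal.ofReal_ne_top).ne')
      (Or.inl (ENNReal.rpow_ne_top_of_nonneg (by positivity) ENNReal.ofReal_ne_top))]
    rwa [mul_comm] at h1
  · rw [lorentzNorm, if_neg hq] at hf
    have hQ : 0 < q.toReal := ENNReal.toReal_pos hq0.ne' hq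
    set P := p.toReal
    set Q := q.toReal
    have hexp : (P⁻¹ - Q⁻¹) * Q = Q / P - 1 := by field_simp
    have hPQ : 0 < Q / P := div_pos hQ hP
    have hint : (∫⁻ s in Ioi (0:ℝ), (ENNReal.ofReal (s ^ (P⁻¹ - Q⁻¹)) * rearr μ f s) ^ Q) ≤ 1 := by
      have h2 := ENNReal.rpow_le_rpow hf hQ.le
      rwa [ENNReal.one_rpow, ← ENNReal.rpow_mul, inv_mul_cancel₀ hQ.ne',
        ENNReal.rpow_one] at h2
    set R := rearr μ f t with hR
    have hmid : R ^ Q * ENNReal.ofReal (t ^ (Q / P) / (Q / P))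
        ≤ ∫⁻ s in Ioo (0:ℝ) t, (ENNReal.ofReal (s ^ (P⁻¹ - Q⁻¹)) * rearr μ f s) ^ Q := by
      rw [← lint_Ioo hPQ ht]
      refine le_trans (lintegral_const_mul_le _ _) (lintegral_mono_ae ?_)
      filter_upwards [ae_restrict_mem measurableSet_Ioo] with s hs
      have h3 : R ≤ rearr μ f s := rearr_anti f hs.2.le
      calc R ^ Q * ENNReal.ofReal (s ^ (Q / P - 1))
          = (ENNReal.ofReal (s ^ (P⁻¹ - Q⁻¹)) * R) ^ Q := by
            rw [ENNReal.mul_rpow_of_nonneg _ _ hQ.le, ← ENNReal.ofReal_rpow_of_pos hs.1,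
              ← ENNReal.ofReal_rpow_of_pos hs.1, ← ENNReal.rpow_mul, hexp, mul_comm]
      _ ≤ (ENNReal.ofReal (s ^ (P⁻¹ - Q⁻¹)) * rearr μ f s) ^ Q :=
            ENNReal.rpow_le_rpow (mul_le_mul_right h3 _) hQ.le
    have hlow : R ^ Q * ENNReal.ofReal (t ^ (Q / P) / (Q / P)) ≤ 1 :=
      hmid.trans (le_trans (lintegral_mono_set Ioo_subset_Ioi_self) hint)
    have hD0 : ENNReal.ofReal (t ^ (Q / P) / (Q / P)) ≠ 0 := by positivity
    have hDtop : ENNReal.ofReal (t ^ (Q / P) / (Q / P)) ≠ ∞ := ENNReal.ofReal_ne_top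
    have h4 : R ^ Q ≤ 1 / ENNReal.ofReal (t ^ (Q / P) / (Q / P)) :=
      (ENNReal.le_div_iff_mul_le (Or.inl hD0) (Or.inl hDtop)).2 hlow
    have h5 : R ≤ (1 / ENNReal.ofReal (t ^ (Q / P) / (Q / P))) ^ Q⁻¹ := by
      have h6 := ENNReal.rpow_le_rpow h4 (by positivity : (0:ℝ) ≤ Q⁻¹)
      rwa [← ENNReal.rpow_mul, mul_inv_cancel₀ hQ.ne', ENNReal.rpow_one] at h6
    refine h5.trans (le_of_eq ?_)
    rw [one_div, ENNReal.inv_rpow, ofReal_div_rpow_inv hP hQ ht, lcst, if_neg hq,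
      ENNReal.mul_inv (Or.inl (by positivity)) (Or.inl ENNReal.ofReal_ne_top),
      ENNReal.rpow_neg]

end MoreHelpers

lemma ENNReal.rpow_ne_top'' {x : ℝ≥0∞} (hx0 : x ≠ 0) (hxt : x ≠ ∞) (y : ℝ) : x ^ y ≠ ∞ := by
  rcases le_or_gt 0 y with hy | hy
  · exact ENNReal.rpow_ne_top_of_nonneg hy hxt
  · have : x ^ y = (x ^ (-y))⁻¹ := by rw [← ENNReal.rpow_neg, neg_neg]
    rw [this, ENNReal.inv_ne_top]
    exact (ENNReal.rpow_pos (hx0.bot_lt) hxt).ne'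

theorem statement17' [SigmaFinite μ] (hμ : μ Set.univ = ∞)
    (p₁ q₁ p₂ q₂ : ℝ≥0∞)
    (hp₁ : 0 < p₁) (hq₁ : 0 < q₁) (hp₂ : 0 < p₂) (hq₂ : 0 < q₂)
    (h1 : p₁ ≠ ∞ ∨ (p₁ = ∞ ∧ q₁ = ∞)) (h2 : p₂ ≠ ∞ ∨ (p₂ = ∞ ∧ q₂ = ∞))
    (X1 X2 : QBFS μ)
    (hX1 : ∀ f : α → ℝ≥0∞, X1.N f = lorentzNorm μ p₁ q₁ f)
    (hX2 : ∀ f : α → ℝ≥0∞, X2.N f = lorentzNorm μ p₂ q₂ f) :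
    AcInfty X1 X2 ↔ p₁ < p₂ := by
  constructor
  · -- AcInfty → p₁ < p₂, by contraposition
    intro hac
    by_contra hcon
    push_neg at hcon
    rcases eq_or_ne p₁ ∞ with hp1t | hp1t
    · -- p₁ = ∞, hence q₁ = ∞; use f ≡ 1
      have hq1t : q₁ = ∞ := by
        rcases h1 with h | h
        · exact absurd hp1t h
        · exact h.2
      have hμuniv : (0:ℝ≥0∞) < μ univ := by rw [hμ]; exact ENNReal.zero_lt_top
      have hN1 : X1.N ((univ : Set α).indicator (1 : α → ℝ≥0∞)) = 1 := by
        rw [hX1, hp1t, hq1t, lorentzNorm_indicator_top _ hμuniv]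
      have key : ∀ a : ℝ, (1:ℝ≥0∞) ≤ acInftyFun X1 X2 a := by
        intro a
        unfold acInftyFun
        refine le_trans ?_ (le_biSup
          (f := fun f => ⨅ E ∈ {E : Set α | MeasurableSet E ∧ μ E ≤ ENNReal.ofReal a},
            X2.N (Eᶜ.indicator f))
          (show (univ : Set α).indicator (1 : α → ℝ≥0∞) ∈ {f : α → ℝ≥0∞ | X1.N f ≤ 1}
            from hN1.le))
        refine le_iInf₂ fun E hE => ?_
        have hEc : μ Eᶜ = ∞ := by
          by_contra hfin
          have h3 : μ univ ≤ μ E + μ Eᶜ := by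
            rw [← union_compl_self E]; exact measure_union_le _ _
          rw [hμ] at h3
          exact absurd (top_le_iff.1 h3)
            (ENNReal.add_ne_top.2 ⟨(hE.2.trans_lt ENNReal.ofReal_lt_top).ne, hfin⟩)
        have heq : Eᶜ.indicator ((univ : Set α).indicator (1 : α → ℝ≥0∞))
            = Eᶜ.indicator 1 := by
          rw [Set.indicator_univ]
        rw [heq, hX2]
        rcases eq_or_ne p₂ ∞ with hp2t | hp2t
        · have hq2t : q₂ = ∞ := by
            rcases h2 with h | h
            · exact absurd hp2t h
            · exact h.2
          rw [hp2t, hq2t, lorentzNorm_indicator_top _ (by rw [hEc]; exact ENNReal.zero_lt_top)]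
        · rw [lorentzNorm_indicator hp₂ hp2t hq₂, hEc,
            ENNReal.top_rpow_of_pos (by
              have := ENNReal.toReal_pos hp₂.ne' hp2t
              positivity),
            ENNReal.mul_top (lcst_pos hp₂ hp2t hq₂).ne']
          exact le_top
      obtain ⟨a, ha⟩ := (hac.eventually_lt_const zero_lt_one).exists
      exact absurd (key a) (not_le.2 ha)
    · -- p₂ ≤ p₁ < ∞
      have hp2t : p₂ ≠ ∞ := fun h => hp1t (top_le_iff.1 (h ▸ hcon))
      have hP1 : 0 < p₁.toReal := ENNReal.toReal_pos hp₁.ne' hp1t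
      have hP2 : 0 < p₂.toReal := ENNReal.toReal_pos hp₂.ne' hp2t
      have hc1 : 0 < lcst p₁ q₁ := lcst_pos hp₁ hp1t hq₁
      have hc1t : lcst p₁ q₁ ≠ ∞ := lcst_ne_top _ _
      have hc2 : 0 < lcst p₂ q₂ := lcst_pos hp₂ hp2t hq₂
      have hc2t : lcst p₂ q₂ ≠ ∞ := lcst_ne_top _ _
      set w : ℝ≥0∞ := (2:ℝ≥0∞) ^ p₂.toReal⁻¹ with hw
      have hw0 : w ≠ 0 := (ENNReal.rpow_pos (by norm_num) ENNReal.ofNat_ne_top).ne'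
      have hwt : w ≠ ∞ := ENNReal.rpow_ne_top_of_nonneg (by positivity) ENNReal.ofNat_ne_top
      set ε₀ : ℝ≥0∞ := lcst p₂ q₂ * w⁻¹ * (lcst p₁ q₁)⁻¹ with hε₀def
      have hε₀ : 0 < ε₀ := by
        refine ENNReal.mul_pos (ENNReal.mul_pos hc2.ne' ?_).ne' ?_ |>.trans_le le_rfl
        · exact (ENNReal.inv_pos.2 hwt).ne'
        · exact (ENNReal.inv_pos.2 hc1t).ne'
      have key : ∀ a : ℝ, ε₀ ≤ acInftyFun X1 X2 a := by
        intro a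
        have hsup : (⨆ n, μ (spanningSets μ n)) = ∞ := by
          rw [← (monotone_spanningSets μ).directed_le.measure_iUnion, iUnion_spanningSets, hμ]
        have hmaxt : max (2 * ENNReal.ofReal a) 1 < ⊤ :=
          max_lt (lt_top_iff_ne_top.2 (ENNReal.mul_ne_top ENNReal.ofNat_ne_top
            ENNReal.ofReal_ne_top)) ENNReal.one_lt_top
        obtain ⟨n, hn⟩ := lt_iSup_iff.1 (show max (2 * ENNReal.ofReal a) 1
            < ⨆ n, μ (spanningSets μ n) by rw [hsup]; exact hmaxt)
        set F := spanningSets μ n with hF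
        set m := μ F with hm
        have hm2a : 2 * ENNReal.ofReal a < m := lt_of_le_of_lt (le_max_left _ _) hn
        have hm1 : 1 < m := lt_of_le_of_lt (le_max_right _ _) hn
        have hmt : m ≠ ∞ := (measure_spanningSets_lt_top μ n).ne
        set u := m ^ p₁.toReal⁻¹ with hu
        have hu0 : u ≠ 0 := (ENNReal.rpow_pos (zero_lt_one.trans hm1) hmt).ne'
        have hut : u ≠ ∞ := ENNReal.rpow_ne_top_of_nonneg (by positivity) hmt
        set n₁ := lcst p₁ q₁ * u with hn₁def
        have hn₁0 : n₁ ≠ 0 := mul_ne_zero hc1.ne' hu0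
        have hn₁t : n₁ ≠ ∞ := ENNReal.mul_ne_top hc1t hut
        set f : α → ℝ≥0∞ := fun x => n₁⁻¹ * F.indicator 1 x with hfdef
        have hNf : X1.N f = 1 := by
          rw [hfdef, X1.smul n₁⁻¹ (F.indicator 1) (ENNReal.inv_ne_top.2 hn₁0), hX1,
            lorentzNorm_indicator hp₁ hp1t hq₁, ← hm, ← hu, ← hn₁def]
          exact ENNReal.inv_mul_cancel hn₁0 hn₁t
        unfold acInftyFun
        refine le_trans ?_ (le_biSup
          (f := fun f => ⨅ E ∈ {E : Set α | MeasurableSet E ∧ μ E ≤ ENNReal.ofReal a},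
            X2.N (Eᶜ.indicator f))
          (show f ∈ {f : α → ℝ≥0∞ | X1.N f ≤ 1} from hNf.le))
        refine le_iInf₂ fun E hE => ?_
        have heq : Eᶜ.indicator f = fun x => n₁⁻¹ * (F \ E).indicator 1 x := by
          funext x
          by_cases hx : x ∈ E
          · have hx1 : x ∉ Eᶜ := by simpa using hx
            have hx2 : x ∉ F \ E := fun h => h.2 hx
            simp [Set.indicator_of_notMem, hx1, hx2]
          · have hx1 : x ∈ Eᶜ := hx
            by_cases hxF : x ∈ F
            · have : x ∈ F \ E := ⟨hxF, hx⟩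
              simp [Set.indicator_of_mem, hx1, this, hfdef, hxF]
            · have : x ∉ F \ E := fun h => hxF h.1
              simp [Set.indicator_of_mem, hx1, this, hfdef, hxF]
        rw [heq, X2.smul _ _ (ENNReal.inv_ne_top.2 hn₁0), hX2,
          lorentzNorm_indicator hp₂ hp2t hq₂]
        have hFE : m / 2 ≤ μ (F \ E) := by
          have ha2 : ENNReal.ofReal a ≤ m / 2 := by
            rw [ENNReal.le_div_iff_mul_le (Or.inl two_ne_zero) (Or.inl ENNReal.ofNat_ne_top),
              mul_comm]
            exact hm2a.le
          calc m / 2 = m - m / 2 := (ENNReal.sub_half hmt).symm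
          _ ≤ m - ENNReal.ofReal a := tsub_le_tsub_left ha2 _
          _ ≤ m - μ E := tsub_le_tsub_left hE.2 _
          _ ≤ μ (F \ E) := le_measure_diff
        have hinv : p₁.toReal⁻¹ ≤ p₂.toReal⁻¹ := by
          have hle : p₂.toReal ≤ p₁.toReal :=
            (ENNReal.toReal_le_toReal hp2t hp1t).2 hcon
          exact inv_anti₀ hP2 hle
        have hmain : u / w ≤ μ (F \ E) ^ p₂.toReal⁻¹ := by
          calc u / w ≤ m ^ p₂.toReal⁻¹ / w := by
                refine ENNReal.div_le_div_right ?_ w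
                rw [hu]
                exact ENNReal.rpow_le_rpow_of_exponent_le hm1.le hinv
          _ = (m / 2) ^ p₂.toReal⁻¹ := by
                rw [ENNReal.div_rpow_of_nonneg _ _ (by positivity), hw]
          _ ≤ μ (F \ E) ^ p₂.toReal⁻¹ := ENNReal.rpow_le_rpow hFE (by positivity)
        have halg : n₁⁻¹ * (lcst p₂ q₂ * (u / w)) = ε₀ := by
          rw [hn₁def, ENNReal.mul_inv (Or.inl hc1.ne') (Or.inl hc1t), div_eq_mul_inv, hε₀def]
          calc (lcst p₁ q₁)⁻¹ * u⁻¹ * (lcst p₂ q₂ * (u * w⁻¹))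
              = (u⁻¹ * u) * (lcst p₂ q₂ * w⁻¹ * (lcst p₁ q₁)⁻¹) := by ring
          _ = lcst p₂ q₂ * w⁻¹ * (lcst p₁ q₁)⁻¹ := by
              rw [ENNReal.inv_mul_cancel hu0 hut, one_mul]
        calc ε₀ = n₁⁻¹ * (lcst p₂ q₂ * (u / w)) := halg.symm
        _ ≤ n₁⁻¹ * (lcst p₂ q₂ * μ (F \ E) ^ p₂.toReal⁻¹) :=
          mul_le_mul_right (mul_le_mul_right hmain _) _
      obtain ⟨a, ha⟩ := (hac.eventually_lt_const hε₀).exists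
      exact absurd (key a) (not_le.2 ha)
  · -- p₁ < p₂ → AcInfty
    intro hlt
    have hp1t : p₁ ≠ ∞ := fun h => absurd (h ▸ hlt) (by simp)
    have hP1 : 0 < p₁.toReal := ENNReal.toReal_pos hp₁.ne' hp1t
    set δ : ℝ := p₁.toReal⁻¹ - p₂.toReal⁻¹ with hδdef
    have hδ : 0 < δ := by
      rcases eq_or_ne p₂ ∞ with h2t | h2t
      · rw [hδdef, h2t]
        simpa using inv_pos.2 hP1
      · have h12 : p₁.toReal < p₂.toReal := (ENNReal.toReal_lt_toReal hp1t h2t).2 hlt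
        have h13 : p₂.toReal⁻¹ < p₁.toReal⁻¹ := inv_strictAnti₀ hP1 h12
        rw [hδdef]
        linarith
    set K := (lcst p₁ q₁)⁻¹ with hKdef
    have hK0 : K ≠ 0 := ENNReal.inv_ne_zero.2 (lcst_ne_top _ _)
    have hKt : K ≠ ∞ := ENNReal.inv_ne_top.2 (lcst_pos hp₁ hp1t hq₁).ne'
    obtain ⟨CB, hCBt, key⟩ : ∃ CB : ℝ≥0∞, CB ≠ ∞ ∧ ∀ a : ℝ, 1 ≤ a →
        acInftyFun X1 X2 a ≤ CB * (ENNReal.ofReal a) ^ (-δ) := by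
      rcases eq_or_ne q₂ ∞ with hq2t | hq2t
      · -- q₂ = ∞
        subst hq2t
        refine ⟨K, hKt, fun a ha => ?_⟩
        have ha0 : (0:ℝ) < a := lt_of_lt_of_le zero_lt_one ha
        have hA0 : ENNReal.ofReal a ≠ 0 := (ENNReal.ofReal_pos.2 ha0).ne'
        have hAt : ENNReal.ofReal a ≠ ∞ := ENNReal.ofReal_ne_top
        unfold acInftyFun
        refine iSup₂_le fun f hf => ?_
        have hf1 : lorentzNorm μ p₁ q₁ f ≤ 1 := by rw [← hX1 f]; exact hf
        have hfb : ∀ t : ℝ, 0 < t → rearr μ f t ≤ K * (ENNReal.ofReal t) ^ (-(p₁.toReal⁻¹)) :=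
          fun t ht => rearr_le_of_lorentzNorm_le hp₁ hp1t hq₁ hf1 ht
        set β := rearr μ f a with hβdef
        have hβ : β ≤ K * (ENNReal.ofReal a) ^ (-(p₁.toReal⁻¹)) := hfb a ha0
        set E := toMeasurable μ {x | β < f x} with hEdef
        have hμE : μ E ≤ ENNReal.ofReal a := by
          rw [hEdef, measure_toMeasurable]; exact measure_lt_rearr_le f a
        refine le_trans (iInf₂_le E ⟨measurableSet_toMeasurable _ _, hμE⟩) ?_
        rw [hX2]
        have hg_le_f : ∀ x, Eᶜ.indicator f x ≤ f x := fun x => Set.indicator_le_self _ _ x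
        have hg_le_β : ∀ x, Eᶜ.indicator f x ≤ β := by
          intro x
          by_cases hx : x ∈ Eᶜ
          · rw [Set.indicator_of_mem hx]
            by_contra hxx
            push_neg at hxx
            exact hx (subset_toMeasurable μ _ hxx)
          · rw [Set.indicator_of_notMem hx]; exact zero_le
        have hgb1 : ∀ t : ℝ, 0 < t →
            rearr μ (Eᶜ.indicator f) t ≤ K * (ENNReal.ofReal t) ^ (-(p₁.toReal⁻¹)) :=
          fun t ht => (rearr_mono hg_le_f t).trans (hfb t ht)
        have hgb2 : ∀ t : ℝ,
            rearr μ (Eᶜ.indicator f) t ≤ K * (ENNReal.ofReal a) ^ (-(p₁.toReal⁻¹)) :=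
          fun t => (rearr_le_of_forall_le hg_le_β t).trans hβ
        rw [lorentzNorm, if_pos rfl]
        refine iSup₂_le fun t ht => ?_
        have ht0 : (0:ℝ) < t := ht
        rw [← ENNReal.ofReal_rpow_of_pos ht0]
        rcases le_total t a with hta | hat
        · calc (ENNReal.ofReal t) ^ p₂.toReal⁻¹ * rearr μ (Eᶜ.indicator f) t
              ≤ (ENNReal.ofReal a) ^ p₂.toReal⁻¹ *
                (K * (ENNReal.ofReal a) ^ (-(p₁.toReal⁻¹))) :=
              mul_le_mul' (ENNReal.rpow_le_rpow (ENNReal.ofReal_le_ofReal hta) (by positivity))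
                (hgb2 t)
          _ = K * (ENNReal.ofReal a) ^ (-δ) := by
              rw [mul_comm ((ENNReal.ofReal a) ^ p₂.toReal⁻¹) _, mul_assoc,
                ← ENNReal.rpow_add _ _ hA0 hAt]
              congr 1
              rw [hδdef]; ring
        · have ht0' : ENNReal.ofReal t ≠ 0 := (ENNReal.ofReal_pos.2 ht0).ne'
          calc (ENNReal.ofReal t) ^ p₂.toReal⁻¹ * rearr μ (Eᶜ.indicator f) t
              ≤ (ENNReal.ofReal t) ^ p₂.toReal⁻¹ *
                (K * (ENNReal.ofReal t) ^ (-(p₁.toReal⁻¹))) :=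
              mul_le_mul_right (hgb1 t ht0) _
          _ = K * (ENNReal.ofReal t) ^ (-δ) := by
              rw [mul_comm ((ENNReal.ofReal t) ^ p₂.toReal⁻¹) _, mul_assoc,
                ← ENNReal.rpow_add _ _ ht0' ENNReal.ofReal_ne_top]
              congr 1
              rw [hδdef]; ring
          _ ≤ K * (ENNReal.ofReal a) ^ (-δ) := by
              refine mul_le_mul_right ?_ K
              rw [ENNReal.rpow_neg, ENNReal.rpow_neg]
              exact ENNReal.inv_le_inv.2
                (ENNReal.rpow_le_rpow (ENNReal.ofReal_le_ofReal hat) hδ.le)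
      · -- q₂ < ∞ (hence p₂ < ∞)
        have hp2t : p₂ ≠ ∞ := by
          rcases h2 with h | h
          · exact h
          · exact absurd h.2 hq2t
        have hP2 : 0 < p₂.toReal := ENNReal.toReal_pos hp₂.ne' hp2t
        have hQ2 : 0 < q₂.toReal := ENNReal.toReal_pos hq₂.ne' hq2t
        refine ⟨(K ^ q₂.toReal * (ENNReal.ofReal (p₂.toReal / q₂.toReal)
            + ENNReal.ofReal (1 / (δ * q₂.toReal)))) ^ q₂.toReal⁻¹,
          ENNReal.rpow_ne_top_of_nonneg (by positivity)
            (ENNReal.mul_ne_top (ENNReal.rpow_ne_top_of_nonneg hQ2.le hKt)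
              (ENNReal.add_ne_top.2 ⟨ENNReal.ofReal_ne_top, ENNReal.ofReal_ne_top⟩)),
          fun a ha => ?_⟩
        have ha0 : (0:ℝ) < a := lt_of_lt_of_le zero_lt_one ha
        have hA0 : ENNReal.ofReal a ≠ 0 := (ENNReal.ofReal_pos.2 ha0).ne'
        have hAt : ENNReal.ofReal a ≠ ∞ := ENNReal.ofReal_ne_top
        unfold acInftyFun
        refine iSup₂_le fun f hf => ?_
        have hf1 : lorentzNorm μ p₁ q₁ f ≤ 1 := by rw [← hX1 f]; exact hf
        have hfb : ∀ t : ℝ, 0 < t → rearr μ f t ≤ K * (ENNReal.ofReal t) ^ (-(p₁.toReal⁻¹)) :=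
          fun t ht => rearr_le_of_lorentzNorm_le hp₁ hp1t hq₁ hf1 ht
        set β := rearr μ f a with hβdef
        have hβ : β ≤ K * (ENNReal.ofReal a) ^ (-(p₁.toReal⁻¹)) := hfb a ha0
        set E := toMeasurable μ {x | β < f x} with hEdef
        have hμE : μ E ≤ ENNReal.ofReal a := by
          rw [hEdef, measure_toMeasurable]; exact measure_lt_rearr_le f a
        refine le_trans (iInf₂_le E ⟨measurableSet_toMeasurable _ _, hμE⟩) ?_
        rw [hX2]
        have hg_le_f : ∀ x, Eᶜ.indicator f x ≤ f x := fun x => Set.indicator_le_self _ _ x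
        have hg_le_β : ∀ x, Eᶜ.indicator f x ≤ β := by
          intro x
          by_cases hx : x ∈ Eᶜ
          · rw [Set.indicator_of_mem hx]
            by_contra hxx
            push_neg at hxx
            exact hx (subset_toMeasurable μ _ hxx)
          · rw [Set.indicator_of_notMem hx]; exact zero_le
        have hgb1 : ∀ t : ℝ, 0 < t →
            rearr μ (Eᶜ.indicator f) t ≤ K * (ENNReal.ofReal t) ^ (-(p₁.toReal⁻¹)) :=
          fun t ht => (rearr_mono hg_le_f t).trans (hfb t ht)
        have hgb2 : ∀ t : ℝ,
            rearr μ (Eᶜ.indicator f) t ≤ K * (ENNReal.ofReal a) ^ (-(p₁.toReal⁻¹)) :=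
          fun t => (rearr_le_of_forall_le hg_le_β t).trans hβ
        rw [lorentzNorm, if_neg hq2t]
        set M := K * (ENNReal.ofReal a) ^ (-(p₁.toReal⁻¹)) with hMdef
        have hMt : M ≠ ∞ := ENNReal.mul_ne_top hKt (ENNReal.rpow_ne_top'' hA0 hAt _)
        have hexp2 : (p₂.toReal⁻¹ - q₂.toReal⁻¹) * q₂.toReal
            = q₂.toReal / p₂.toReal - 1 := by field_simp
        have hexp3 : (p₂.toReal⁻¹ - q₂.toReal⁻¹ + -(p₁.toReal⁻¹)) * q₂.toReal
            = -(δ * q₂.toReal) - 1 := by rw [hδdef]; field_simp; ring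
        have hr2 : -(δ * q₂.toReal) < 0 := by
          have := mul_pos hδ hQ2; linarith
        have hsplit : (∫⁻ t in Ioi (0:ℝ),
              (ENNReal.ofReal (t ^ (p₂.toReal⁻¹ - q₂.toReal⁻¹))
                * rearr μ (Eᶜ.indicator f) t) ^ q₂.toReal)
            = (∫⁻ t in Ioo (0:ℝ) a,
              (ENNReal.ofReal (t ^ (p₂.toReal⁻¹ - q₂.toReal⁻¹))
                * rearr μ (Eᶜ.indicator f) t) ^ q₂.toReal)
            + ∫⁻ t in Ici a,
              (ENNReal.ofReal (t ^ (p₂.toReal⁻¹ - q₂.toReal⁻¹))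
                * rearr μ (Eᶜ.indicator f) t) ^ q₂.toReal := by
          rw [← lintegral_union measurableSet_Ici
            ((Set.Iio_disjoint_Ici le_rfl).mono_left Set.Ioo_subset_Iio_self),
            Set.Ioo_union_Ici_eq_Ioi ha0]
        have hB1 : (∫⁻ t in Ioo (0:ℝ) a,
              (ENNReal.ofReal (t ^ (p₂.toReal⁻¹ - q₂.toReal⁻¹))
                * rearr μ (Eᶜ.indicator f) t) ^ q₂.toReal)
            ≤ M ^ q₂.toReal
              * ENNReal.ofReal (a ^ (q₂.toReal / p₂.toReal) / (q₂.toReal / p₂.toReal)) := by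
          rw [← lint_Ioo (div_pos hQ2 hP2) ha0,
            ← lintegral_const_mul' _ _ (ENNReal.rpow_ne_top_of_nonneg hQ2.le hMt)]
          refine lintegral_mono_ae ?_
          filter_upwards [ae_restrict_mem measurableSet_Ioo] with t htm
          calc (ENNReal.ofReal (t ^ (p₂.toReal⁻¹ - q₂.toReal⁻¹))
                * rearr μ (Eᶜ.indicator f) t) ^ q₂.toReal
              ≤ (ENNReal.ofReal (t ^ (p₂.toReal⁻¹ - q₂.toReal⁻¹)) * M) ^ q₂.toReal :=
                ENNReal.rpow_le_rpow (mul_le_mul_right (hgb2 t) _) hQ2.le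
          _ = M ^ q₂.toReal * ENNReal.ofReal (t ^ (q₂.toReal / p₂.toReal - 1)) := by
                rw [ENNReal.mul_rpow_of_nonneg _ _ hQ2.le, mul_comm]
                congr 1
                rw [← ENNReal.ofReal_rpow_of_pos htm.1, ← ENNReal.ofReal_rpow_of_pos htm.1,
                  ← ENNReal.rpow_mul, hexp2]
        have hB2 : (∫⁻ t in Ici a,
              (ENNReal.ofReal (t ^ (p₂.toReal⁻¹ - q₂.toReal⁻¹))
                * rearr μ (Eᶜ.indicator f) t) ^ q₂.toReal)
            ≤ K ^ q₂.toReal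
              * ENNReal.ofReal (a ^ (-(δ * q₂.toReal)) / (δ * q₂.toReal)) := by
          rw [setLIntegral_congr (Ioi_ae_eq_Ici (a := a)).symm]
          have hval := lint_Ioi hr2 ha0
          rw [neg_neg] at hval
          rw [← hval, ← lintegral_const_mul' _ _ (ENNReal.rpow_ne_top_of_nonneg hQ2.le hKt)]
          refine lintegral_mono_ae ?_
          filter_upwards [ae_restrict_mem measurableSet_Ioi] with t htm
          have htp : (0:ℝ) < t := ha0.trans htm
          have htp0 : ENNReal.ofReal t ≠ 0 := (ENNReal.ofReal_pos.2 htp).ne'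
          calc (ENNReal.ofReal (t ^ (p₂.toReal⁻¹ - q₂.toReal⁻¹))
                * rearr μ (Eᶜ.indicator f) t) ^ q₂.toReal
              ≤ (ENNReal.ofReal (t ^ (p₂.toReal⁻¹ - q₂.toReal⁻¹))
                * (K * (ENNReal.ofReal t) ^ (-(p₁.toReal⁻¹)))) ^ q₂.toReal :=
                ENNReal.rpow_le_rpow (mul_le_mul_right (hgb1 t htp) _) hQ2.le
          _ = K ^ q₂.toReal * ENNReal.ofReal (t ^ (-(δ * q₂.toReal) - 1)) := by
                rw [← ENNReal.ofReal_rpow_of_pos htp, ← mul_assoc,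
                  mul_comm ((ENNReal.ofReal t) ^ (p₂.toReal⁻¹ - q₂.toReal⁻¹)) K, mul_assoc,
                  ← ENNReal.rpow_add _ _ htp0 ENNReal.ofReal_ne_top,
                  ENNReal.mul_rpow_of_nonneg _ _ hQ2.le, ← ENNReal.rpow_mul, hexp3,
                  ENNReal.ofReal_rpow_of_pos htp]
        have htot : (∫⁻ t in Ioi (0:ℝ),
              (ENNReal.ofReal (t ^ (p₂.toReal⁻¹ - q₂.toReal⁻¹))
                * rearr μ (Eᶜ.indicator f) t) ^ q₂.toReal)
            ≤ (K ^ q₂.toReal * (ENNReal.ofReal (p₂.toReal / q₂.toReal)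
                + ENNReal.ofReal (1 / (δ * q₂.toReal))))
              * (ENNReal.ofReal a) ^ (-(δ * q₂.toReal)) := by
          rw [hsplit]
          have hT1 : M ^ q₂.toReal
                * ENNReal.ofReal (a ^ (q₂.toReal / p₂.toReal) / (q₂.toReal / p₂.toReal))
              = K ^ q₂.toReal * ENNReal.ofReal (p₂.toReal / q₂.toReal)
                * (ENNReal.ofReal a) ^ (-(δ * q₂.toReal)) := by
            have h5 : a ^ (q₂.toReal / p₂.toReal) / (q₂.toReal / p₂.toReal)
                = (p₂.toReal / q₂.toReal) * a ^ (q₂.toReal / p₂.toReal) := by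
              rw [div_eq_mul_inv, inv_div, mul_comm]
            have h6 : -(δ * q₂.toReal) = -p₁.toReal⁻¹ * q₂.toReal + q₂.toReal / p₂.toReal := by
              rw [hδdef]; field_simp; ring
            rw [hMdef, ENNReal.mul_rpow_of_nonneg _ _ hQ2.le, h5,
              ENNReal.ofReal_mul (by positivity), ← ENNReal.ofReal_rpow_of_pos ha0,
              ← ENNReal.rpow_mul, h6, ENNReal.rpow_add _ _ hA0 hAt]
            ring
          have hT2 : ENNReal.ofReal (a ^ (-(δ * q₂.toReal)) / (δ * q₂.toReal))
              = ENNReal.ofReal (1 / (δ * q₂.toReal)) * (ENNReal.ofReal a) ^ (-(δ * q₂.toReal)) := by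
            rw [div_eq_mul_inv, mul_comm, ENNReal.ofReal_mul (by positivity),
              ← ENNReal.ofReal_rpow_of_pos ha0, one_div]
          calc _ ≤ (M ^ q₂.toReal
                * ENNReal.ofReal (a ^ (q₂.toReal / p₂.toReal) / (q₂.toReal / p₂.toReal)))
              + (K ^ q₂.toReal * ENNReal.ofReal (a ^ (-(δ * q₂.toReal)) / (δ * q₂.toReal))) :=
            add_le_add hB1 hB2
          _ = _ := by
            rw [hT1, hT2]
            ring
        refine le_trans (ENNReal.rpow_le_rpow htot (by positivity)) (le_of_eq ?_)
        have hfin : -(δ * q₂.toReal) * q₂.toReal⁻¹ = -δ := by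
          rw [neg_mul, mul_assoc, mul_inv_cancel₀ hQ2.ne', mul_one]
        rw [ENNReal.mul_rpow_of_nonneg _ _ (by positivity), ← ENNReal.rpow_mul, hfin]

    rw [AcInfty, ENNReal.tendsto_nhds_zero]
    intro ε hε
    have h3 : Tendsto (fun a : ℝ => (ENNReal.ofReal a) ^ δ) atTop (𝓝 ∞) := by
      apply Tendsto.congr' _ (ENNReal.tendsto_ofReal_atTop.comp (tendsto_rpow_atTop hδ))
      filter_upwards [eventually_gt_atTop (0:ℝ)] with a ha
      exact (ENNReal.ofReal_rpow_of_pos ha).symm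
    have h2 := ENNReal.tendsto_inv_iff.2 h3
    rw [ENNReal.inv_top] at h2
    have h1 : Tendsto (fun a : ℝ => (ENNReal.ofReal a) ^ (-δ)) atTop (𝓝 0) := by
      refine h2.congr fun a => ?_
      rw [ENNReal.rpow_neg]
    have htend0 : Tendsto (fun a : ℝ => CB * (ENNReal.ofReal a) ^ (-δ)) atTop (𝓝 0) := by
      have := ENNReal.Tendsto.const_mul h1 (Or.inr hCBt)
      simpa using this
    have hev := (ENNReal.tendsto_nhds_zero.1 htend0) ε hε
    filter_upwards [hev, eventually_ge_atTop (1:ℝ)] with a hba h2a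
    exact le_trans (key a h2a) hba

/-- for Lorentz spaces, `L^{p₁,q₁} ⊂∞ L^{p₂,q₂}` iff `p₁ < p₂`. -/
theorem statement17 [SigmaFinite μ] [NullSingletonClass μ] (hμ : μ Set.univ = ∞)
    (p₁ q₁ p₂ q₂ : ℝ≥0∞)
    (hp₁ : 0 < p₁) (hq₁ : 0 < q₁) (hp₂ : 0 < p₂) (hq₂ : 0 < q₂)
    (h1 : p₁ ≠ ∞ ∨ (p₁ = ∞ ∧ q₁ = ∞)) (h2 : p₂ ≠ ∞ ∨ (p₂ = ∞ ∧ q₂ = ∞))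
    (X1 X2 : QBFS μ)
    (hX1 : ∀ f : α → ℝ≥0∞, X1.N f = lorentzNorm μ p₁ q₁ f)
    (hX2 : ∀ f : α → ℝ≥0∞, X2.N f = lorentzNorm μ p₂ q₂ f) :
    AcInfty X1 X2 ↔ p₁ < p₂ :=
  statement17' hμ p₁ q₁ p₂ q₂ hp₁ hq₁ hp₂ hq₂ h1 h2 X1 X2 hX1 hX2
end
end
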